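/- Let ℝ[[x]] have termwise differentiation and integration, let k, h ∈ ℝ[[x]] be invertible (nonzero constant term), and define D_K(f) := h⁻¹·(f·k⁻¹)' and P_K(f) := k·∫₀ˣ(h·f), where ∫₀ˣ denotes termwise integration. Then D_K ∘ P_K = id on ℝ[[x]], D_K satisfies D_K(fg) = D_K(f)g + fD_K(g) - fD_K(1)g, and P_K satisfies the weighted Reynolds identity P_K(f)P_K(g) = P_K(fP_K(g)) + P_K(P_K(f)g) - P_K(D_K(1)P_K(f)P_K(g)) for all f,g ∈ ℝ[[x]]. -/

import Mathlib

open PowerSeries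

/-- Termwise integration on `ℝ⟦X⟧`. -/
noncomputable def integ (f : ℝ⟦X⟧) : ℝ⟦X⟧ :=
  PowerSeries.mk fun n => if n = 0 then 0 else (PowerSeries.coeff (n - 1) f) / n

/-- `D_K(f) = h⁻¹·(f·k⁻¹)'`. -/
noncomputable def DK (k h f : ℝ⟦X⟧) : ℝ⟦X⟧ := h⁻¹ * derivativeFun (f * k⁻¹)

/-- `P_K(f) = k·∫₀ˣ(h·f)`. -/
noncomputable def PK (k h f : ℝ⟦X⟧) : ℝ⟦X⟧ := k * integ (h * f)

lemma coeff_derivativeFun' (f : ℝ⟦X⟧) (n : ℕ) :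
    coeff n (derivativeFun f) = coeff (n + 1) f * (n + 1) :=
  coeff_derivative f n

lemma deriv_integ (f : ℝ⟦X⟧) : derivativeFun (integ f) = f := by
  ext n
  rw [coeff_derivativeFun', integ, coeff_mk]
  simp only [Nat.succ_ne_zero, if_false, Nat.add_sub_cancel]
  have : ((n : ℝ) + 1) ≠ 0 := by positivity
  push_cast
  field_simp

lemma constantCoeff_integ (f : ℝ⟦X⟧) : constantCoeff (integ f) = 0 := by
  rw [← coeff_zero_eq_constantCoeff, integ, coeff_mk]
  simp

lemma derivativeFun_sub (f g : ℝ⟦X⟧) :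
    derivativeFun (f - g) = derivativeFun f - derivativeFun g := by
  ext n
  simp [coeff_derivativeFun', sub_mul]

lemma ext_of_deriv (f g : ℝ⟦X⟧) (hd : derivativeFun f = derivativeFun g)
    (hc : constantCoeff f = constantCoeff g) : f = g := by
  ext n
  cases n with
  | zero => simpa using hc
  | succ n =>
    have := congrArg (fun p => PowerSeries.coeff n p) hd
    simp only [coeff_derivativeFun'] at this
    have hn : ((n : ℝ) + 1) ≠ 0 := by positivity
    exact mul_right_cancel₀ hn this

/-- For invertible `k, h ∈ ℝ[[x]]`: `D_K∘P_K = id`, `D_K` is a modified differential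
operator, and `P_K` satisfies the weighted Reynolds identity of weight `D_K(1)`. -/
theorem stmt15 (k h : ℝ⟦X⟧)
    (hk : constantCoeff k ≠ 0) (hh : constantCoeff h ≠ 0) :
    (∀ f : ℝ⟦X⟧, DK k h (PK k h f) = f) ∧
    (∀ f g : ℝ⟦X⟧, DK k h (f * g) = DK k h f * g + f * DK k h g - f * DK k h 1 * g) ∧
    (∀ f g : ℝ⟦X⟧, PK k h f * PK k h g =
        PK k h (f * PK k h g) + PK k h (PK k h f * g)
          - PK k h (DK k h 1 * (PK k h f * PK k h g))) := by
  have hkk : k * k⁻¹ = 1 := PowerSeries.mul_inv_cancel k hk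
  have hhh : h⁻¹ * h = 1 := PowerSeries.inv_mul_cancel h hh
  have hhh' : h * h⁻¹ = 1 := PowerSeries.mul_inv_cancel h hh
  -- derivative of k in terms of derivative of k⁻¹
  have hdk : derivativeFun k = -(k * k * derivativeFun k⁻¹) := by
    have h0 : derivativeFun (k * k⁻¹) = 0 := by rw [hkk, derivativeFun_one]
    rw [derivativeFun_mul, smul_eq_mul, smul_eq_mul] at h0
    have := congrArg (fun p => k * p) h0
    simp only [mul_add, mul_zero] at this
    have h1 : k * (k⁻¹ * derivativeFun k) = derivativeFun k := by
      rw [← mul_assoc, hkk, one_mul]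
    rw [h1] at this
    linear_combination this
  constructor
  · intro f
    unfold DK PK
    have : k * integ (h * f) * k⁻¹ = integ (h * f) := by
      rw [mul_comm k (integ (h * f)), mul_assoc, hkk, mul_one]
    rw [this, deriv_integ, ← mul_assoc, hhh, one_mul]
  constructor
  · intro f g
    unfold DK
    have e1 : f * g * k⁻¹ = f * (g * k⁻¹) := by ring
    rw [e1, derivativeFun_mul, derivativeFun_mul f k⁻¹, derivativeFun_mul g k⁻¹,
      one_mul, smul_eq_mul, smul_eq_mul, smul_eq_mul, smul_eq_mul, smul_eq_mul, smul_eq_mul]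
    ring
  · intro f g
    unfold PK DK
    set u := integ (h * f) with hu
    set v := integ (h * g) with hv
    have hdu : derivativeFun u = h * f := deriv_integ _
    have hdv : derivativeFun v = h * g := deriv_integ _
    -- simplify the third integrand
    have e3 : h * (h⁻¹ * derivativeFun (1 * k⁻¹) * (k * u * (k * v)))
        = derivativeFun k⁻¹ * (k * u * (k * v)) := by
      rw [one_mul]
      linear_combination derivativeFun k⁻¹ * (k * u * (k * v)) * hhh'
    rw [e3]
    have key : k * u * v =
        integ (h * (f * (k * v))) + integ (h * (k * u * g))
          - integ (derivativeFun k⁻¹ * (k * u * (k * v))) := by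
      apply ext_of_deriv
      · rw [derivativeFun_sub, derivativeFun_add, deriv_integ, deriv_integ, deriv_integ]
        rw [derivativeFun_mul (k * u) v, derivativeFun_mul k u, hdu, hdv,
          smul_eq_mul, smul_eq_mul, smul_eq_mul, smul_eq_mul, hdk]
        ring
      · simp only [map_sub, map_add, constantCoeff_integ, map_mul]
        rw [hu, constantCoeff_integ]
        ring
    calc k * u * (k * v) = k * (k * u * v) := by ring
      _ = _ := by rw [key]; ring
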